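/- arXiv:2212.14476 — 3 statements merged into one kernel-verified Lean document; each statement's English description precedes it below -/
import Mathlib

section
/- High-temperature expansion of the partition function: for every N ∈ ℕ, every β ∈ ℝ and every symmetric array of real numbers (g_{ij})_{1≤i,j≤N} with g_{ii} = 0, one has the identity 2^{-N} Σ_{σ∈{-1,1}^N} exp( β Σ_{1≤i<j≤N} g_{ij} σ_i σ_j ) = ( ∏_{1≤u<v≤N} cosh(β g_{uv}) ) · Σ_{γ∈Γ_sc} ∏_{{u,v}∈E_γ} tanh(β g_{uv}), where the sum is over all simple closed graphs on [N] (the empty graph contributing 1). -/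
open MeasureTheory ProbabilityTheory Filter Topology
open scoped NNReal ENNReal

namespace SK

/-- Edges are ordered pairs `(u, v)` with `u < v`. -/
abbrev Edge (N : ℕ) := Fin N × Fin N

variable {N : ℕ}

/-- An edge set determines a simple graph if every edge is an increasing pair. -/
def IsGraph (E : Finset (Edge N)) : Prop := ∀ e ∈ E, e.1 < e.2

/-- Degree of a vertex: the number of edges containing it. -/
def degree (E : Finset (Edge N)) (v : Fin N) : ℕ :=
  (E.filter fun e => e.1 = v ∨ e.2 = v).card

/-- Vertex set of a graph given by an edge set (no isolated vertices). -/
def verts (E : Finset (Edge N)) : Finset (Fin N) :=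
  Finset.univ.filter fun v => 0 < degree E v

/-- The simple graph associated to an edge set. -/
def toSG (E : Finset (Edge N)) : SimpleGraph (Fin N) where
  Adj u v := u ≠ v ∧ ((u, v) ∈ E ∨ (v, u) ∈ E)
  symm := ⟨fun _ _ h => ⟨h.1.symm, h.2.symm⟩⟩
  loopless := ⟨fun _ h => h.1 rfl⟩

/-- Connectivity of the graph induced on its vertex set. -/
def GConnected (E : Finset (Edge N)) : Prop :=
  ∀ u ∈ verts E, ∀ v ∈ verts E, (toSG E).Reachable u v

/-- Simple closed graph: every vertex has even degree (member of `Γ_sc`;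
the empty graph is allowed). -/
def IsClosed (E : Finset (Edge N)) : Prop :=
  IsGraph E ∧ ∀ v, Even (degree E v)

/-- Cycle (simple loop, member of `Γ_loop`): connected with all degrees equal to two. -/
def IsCycle (E : Finset (Edge N)) : Prop :=
  IsGraph E ∧ E.Nonempty ∧ GConnected E ∧ ∀ v ∈ verts E, degree E v = 2

/-- Self-avoiding path from `i` to `j` (member of `Γ_p^{ij}`): connected, exactly the two
vertices `i ≠ j` have degree one, and all other vertices have degree two. -/
def IsPath (i j : Fin N) (E : Finset (Edge N)) : Prop :=
  IsGraph E ∧ i ≠ j ∧ GConnected E ∧ i ∈ verts E ∧ j ∈ verts E ∧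
    degree E i = 1 ∧ degree E j = 1 ∧ ∀ v ∈ verts E, v ≠ i → v ≠ j → degree E v = 2

/-- The edge `{i, j}` as an ordered pair. -/
def mkEdge (i j : Fin N) : Edge N := if i < j then (i, j) else (j, i)

/-- Weight of a graph: `w(γ) = ∏_{e ∈ γ} tanh(β g_e)`, with `w(∅) = 1`. -/
noncomputable def wt (β : ℝ) (g : Fin N → Fin N → ℝ) (E : Finset (Edge N)) : ℝ :=
  ∏ e ∈ E, Real.tanh (β * g e.1 e.2)

/-- Polynomial weight of a graph: `∏_{e ∈ γ} β g_e`. -/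
noncomputable def pwt (β : ℝ) (g : Fin N → Fin N → ℝ) (E : Finset (Edge N)) : ℝ :=
  ∏ e ∈ E, β * g e.1 e.2

/-- Spin value of a Boolean configuration entry. -/
def spin (b : Bool) : ℝ := if b then 1 else -1

/-- The set of increasing pairs `i < j`. -/
def pairs (N : ℕ) : Finset (Edge N) := Finset.univ.filter fun e => e.1 < e.2

/-- SK Hamiltonian `H_N(σ) = β ∑_{i<j} g_{ij} σ_i σ_j`. -/
noncomputable def hamil (β : ℝ) (g : Fin N → Fin N → ℝ) (σ : Fin N → ℝ) : ℝ :=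
  β * ∑ e ∈ pairs N, g e.1 e.2 * σ e.1 * σ e.2

/-- Gibbs expectation `⟨f⟩`. -/
noncomputable def gibbs (β : ℝ) (g : Fin N → Fin N → ℝ) (f : (Fin N → ℝ) → ℝ) : ℝ :=
  (∑ s : Fin N → Bool, f (fun i => spin (s i)) * Real.exp (hamil β g fun i => spin (s i))) /
    ∑ s : Fin N → Bool, Real.exp (hamil β g fun i => spin (s i))

/-- Two point correlation matrix `M = (⟨σ_i σ_j⟩)`. -/
noncomputable def Mmat (β : ℝ) (g : Fin N → Fin N → ℝ) : Matrix (Fin N) (Fin N) ℝ :=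
  Matrix.of fun i j => gibbs β g fun σ => σ i * σ j

/-- Self-avoiding path matrix `P`: `p_{ii} = 1` and
`p_{ij} = ∑_{γ ∈ Γ_p^{ij}} ∏_{e ∈ γ} β g_e` for `i ≠ j`. -/
noncomputable def Pmat (β : ℝ) (g : Fin N → Fin N → ℝ) : Matrix (Fin N) (Fin N) ℝ :=
  Matrix.of fun i j =>
    if i = j then 1 else ∑ᶠ E ∈ {E : Finset (Edge N) | IsPath i j E}, pwt β g E

/-- Frobenius (Hilbert–Schmidt) norm of a matrix. -/
noncomputable def frobNorm (A : Matrix (Fin N) (Fin N) ℝ) : ℝ :=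
  Real.sqrt (∑ i, ∑ j, A i j ^ 2)

/-- Euclidean operator norm of a matrix: `sup_{‖v‖ = 1} ‖A v‖`. -/
noncomputable def opNorm (A : Matrix (Fin N) (Fin N) ℝ) : ℝ :=
  sSup {r : ℝ | ∃ v : Fin N → ℝ, ∑ i, v i ^ 2 = 1 ∧ r = Real.sqrt (∑ i, A.mulVec v i ^ 2)}

/-- The resolvent `((1 + β²)·id - βG)⁻¹`. -/
noncomputable def resolvent (β : ℝ) (G : Matrix (Fin N) (Fin N) ℝ) : Matrix (Fin N) (Fin N) ℝ :=
  ((1 + β ^ 2) • (1 : Matrix (Fin N) (Fin N) ℝ) - β • G)⁻¹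

/-- Large graph threshold `k_N = (log N)^{3/2}`. -/
noncomputable def kN (N : ℕ) : ℝ := Real.log N ^ (3 / 2 : ℝ)

/-- `E` is an edge-disjoint union of self-avoiding paths with endpoints in `W`. -/
def IsPathUnion (W : Finset (Fin N)) (E : Finset (Edge N)) : Prop :=
  ∃ (k : ℕ) (p : Fin k → Finset (Edge N)) (a b : Fin k → Fin N),
    (∀ t, IsPath (a t) (b t) (p t)) ∧ (∀ t, a t ∈ W ∧ b t ∈ W) ∧
    (∀ s t, s ≠ t → Disjoint (p s) (p t)) ∧ E = Finset.univ.biUnion p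

/-- Relabeling of a graph by a permutation of the vertices. -/
def relabel (π : Equiv.Perm (Fin N)) (E : Finset (Edge N)) : Finset (Edge N) :=
  E.image fun e => mkEdge (π e.1) (π e.2)

/-- Two graphs on the same vertex set are isomorphic if one is a relabeling of the other. -/
def Isomorphic (E E' : Finset (Edge N)) : Prop :=
  ∃ π : Equiv.Perm (Fin N), relabel π E = E'

/-- The set `T_{η₁}^{ij}` of multiplicity-two graphs `ψ₂(γ∘τ) = γ ∩ τ` arising from pairs
`(γ, τ) ∈ S_{η₁}^{ij}`, i.e. `γ ∈ Γ_loop`, `τ ∈ Γ_sc`, `{i,j} ∈ γ`, `|V_γ ∩ V_τ| ≥ 2`,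
`|γ| < c` and `ψ₁(γ∘τ) = η₁`. -/
def Tset (N : ℕ) (c : ℝ) (i j : Fin N) (η₁ : Finset (Edge N)) : Set (Finset (Edge N)) :=
  {η₂ | ∃ γ τ : Finset (Edge N), IsCycle γ ∧ IsClosed τ ∧ mkEdge i j ∈ γ ∧
    2 ≤ (verts γ ∩ verts τ).card ∧ (γ.card : ℝ) < c ∧
    (γ ∪ τ) \ (γ ∩ τ) = η₁ ∧ γ ∩ τ = η₂}

/-- The coupling hypotheses of the SK model: `(g_{ij})_{i<j}` are independent centered
Gaussian random variables of variance `1/N`, extended symmetrically with `g_{ii} = 0`. -/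
def IsSKCoupling (N : ℕ) {Ω : Type} [MeasureSpace Ω] (g : Ω → Fin N → Fin N → ℝ) : Prop :=
  IsProbabilityMeasure (ℙ : Measure Ω) ∧
    (∀ i j, Measurable fun ω => g ω i j) ∧
    (∀ ω i j, g ω j i = g ω i j) ∧
    (∀ ω i, g ω i i = 0) ∧
    (∀ i j : Fin N, i < j →
      Measure.map (fun ω => g ω i j) ℙ = gaussianReal 0 (N : ℝ≥0)⁻¹) ∧
    iIndepFun
      (fun (e : {e : Edge N // e.1 < e.2}) ω => g ω e.1.1 e.1.2) ℙ

lemma exp_eps (t ε : ℝ) (hε : ε = 1 ∨ ε = -1) :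
    Real.exp (t * ε) = Real.cosh t * (ε * Real.tanh t + 1) := by
  have hc : Real.cosh t ≠ 0 := (Real.cosh_pos t).ne'
  rcases hε with h | h <;> subst h
  · rw [mul_one, ← Real.cosh_add_sinh, Real.tanh_eq_sinh_div_cosh]
    field_simp
    ring
  · rw [mul_neg_one, Real.tanh_eq_sinh_div_cosh]
    field_simp
    linarith [Real.cosh_sub_sinh t]

lemma spin_mul_spin (b b' : Bool) : spin b * spin b' = 1 ∨ spin b * spin b' = -1 := by
  cases b <;> cases b' <;> simp [spin]

lemma degree_insert (a : Edge N) (E : Finset (Edge N)) (ha : a ∉ E) (v : Fin N) :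
    degree (insert a E) v = degree E v + (if a.1 = v ∨ a.2 = v then 1 else 0) := by
  unfold degree
  rw [Finset.filter_insert]
  split_ifs with h
  · rw [Finset.card_insert_of_notMem (fun hmem => ha (Finset.mem_filter.mp hmem).1)]
  · omega

lemma prod_spin (σ : Fin N → ℝ) (E : Finset (Edge N)) (hE : ∀ e ∈ E, e.1 ≠ e.2) :
    ∏ e ∈ E, σ e.1 * σ e.2 = ∏ v, σ v ^ degree E v := by
  classical
  induction E using Finset.induction_on with
  | empty => simp [degree]
  | @insert a E ha ih =>
    have ha1 : a.1 ≠ a.2 := hE a (Finset.mem_insert_self a E)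
    rw [Finset.prod_insert ha, ih (fun e he => hE e (Finset.mem_insert_of_mem he))]
    have hdeg : ∀ v, degree (insert a E) v
        = degree E v + (if a.1 = v ∨ a.2 = v then 1 else 0) :=
      degree_insert a E ha
    simp_rw [hdeg, pow_add]
    rw [Finset.prod_mul_distrib]
    have : ∏ v, σ v ^ (if a.1 = v ∨ a.2 = v then 1 else 0) = σ a.1 * σ a.2 := by
      have h1 : ∀ v : Fin N, σ v ^ (if a.1 = v ∨ a.2 = v then 1 else 0)
          = if a.1 = v ∨ a.2 = v then σ v else 1 := by
        intro v; split_ifs <;> simp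
      simp_rw [h1]
      rw [← Finset.prod_filter]
      have h2 : Finset.univ.filter (fun v => a.1 = v ∨ a.2 = v) = {a.1, a.2} := by
        ext v; simp [eq_comm]
      rw [h2, Finset.prod_pair ha1]
    rw [this]; ring

/-- high-temperature expansion of the partition function:
`2^{-N} ∑_σ exp(β ∑_{i<j} g_{ij} σ_i σ_j)
  = (∏_{u<v} cosh(β g_{uv})) · ∑_{γ ∈ Γ_sc} ∏_{e ∈ γ} tanh(β g_e)`. -/
theorem high_temperature_expansion (N : ℕ) (β : ℝ) (g : Fin N → Fin N → ℝ)
    (hsym : ∀ i j, g j i = g i j) (hdiag : ∀ i, g i i = 0) :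
    (∑ s : Fin N → Bool, Real.exp (hamil β g fun i => spin (s i))) / 2 ^ N =
      (∏ e ∈ pairs N, Real.cosh (β * g e.1 e.2)) *
        ∑ᶠ E ∈ {E : Finset (Edge N) | IsClosed E}, wt β g E := by
  classical
  have hpairs : ∀ E ∈ (pairs N).powerset, ∀ e ∈ E, e.1 ≠ e.2 := by
    intro E hE e he
    exact ne_of_lt (Finset.mem_filter.mp (Finset.mem_powerset.mp hE he)).2
  set C : ℝ := ∏ e ∈ pairs N, Real.cosh (β * g e.1 e.2) with hC
  -- Step 1: expand each exponential
  have hexp : ∀ s : Fin N → Bool,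
      Real.exp (hamil β g fun i => spin (s i)) =
        C * ∑ E ∈ (pairs N).powerset,
          (∏ v, spin (s v) ^ degree E v) * wt β g E := by
    intro s
    have h1 : Real.exp (hamil β g fun i => spin (s i)) =
        ∏ e ∈ pairs N, Real.exp ((β * g e.1 e.2) * (spin (s e.1) * spin (s e.2))) := by
      rw [hamil, Finset.mul_sum, Real.exp_sum]
      refine Finset.prod_congr rfl fun e _ => ?_
      congr 1; ring
    have h2 : ∀ e ∈ pairs N,
        Real.exp ((β * g e.1 e.2) * (spin (s e.1) * spin (s e.2))) =
          Real.cosh (β * g e.1 e.2) *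
            (spin (s e.1) * spin (s e.2) * Real.tanh (β * g e.1 e.2) + 1) :=
      fun e _ => exp_eps _ _ (spin_mul_spin (s e.1) (s e.2))
    rw [h1, Finset.prod_congr rfl h2, Finset.prod_mul_distrib, ← hC, Finset.prod_add]
    congr 1
    refine Finset.sum_congr rfl fun E hE => ?_
    simp only [Finset.prod_const_one, mul_one]
    rw [Finset.prod_mul_distrib, prod_spin (fun i => spin (s i)) E (hpairs E hE)]
    rfl
  -- Step 2: sum over spins and swap
  have hsum : (∑ s : Fin N → Bool, Real.exp (hamil β g fun i => spin (s i))) =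
      C * ∑ E ∈ (pairs N).powerset,
        (∑ s : Fin N → Bool, ∏ v, spin (s v) ^ degree E v) * wt β g E := by
    simp_rw [hexp, ← Finset.mul_sum]
    congr 1
    rw [Finset.sum_comm]
    refine Finset.sum_congr rfl fun E _ => ?_
    rw [Finset.sum_mul]
  -- Step 3: compute the inner spin sum
  have hinner : ∀ E : Finset (Edge N),
      (∑ s : Fin N → Bool, ∏ v, spin (s v) ^ degree E v)
        = if ∀ v, Even (degree E v) then (2 : ℝ) ^ N else 0 := by
    intro E
    have hfac : (∑ s : Fin N → Bool, ∏ v, spin (s v) ^ degree E v)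
        = ∏ v, ((1 : ℝ) ^ degree E v + (-1 : ℝ) ^ degree E v) := by
      rw [← Fintype.prod_sum (fun v (b : Bool) => spin b ^ degree E v)]
      refine Finset.prod_congr rfl fun v _ => ?_
      simp [spin, add_comm]
    rw [hfac]
    split_ifs with h
    · have h2 : ∀ v ∈ Finset.univ,
          (1 : ℝ) ^ degree E v + (-1 : ℝ) ^ degree E v = 2 := fun v _ => by
        rw [one_pow, (h v).neg_one_pow]; norm_num
      rw [Finset.prod_congr rfl h2, Finset.prod_const, Finset.card_univ, Fintype.card_fin]
    · push_neg at h
      obtain ⟨v, hv⟩ := h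
      refine Finset.prod_eq_zero (Finset.mem_univ v) ?_
      rw [one_pow, (Nat.not_even_iff_odd.mp hv).neg_one_pow]
      ring
  -- Step 4: rewrite the finsum over closed graphs as a finset sum
  have hset : {E : Finset (Edge N) | IsClosed E}
      = ↑((pairs N).powerset.filter fun E => ∀ v, Even (degree E v)) := by
    ext E
    simp only [Set.mem_setOf_eq, Finset.coe_filter, Finset.mem_powerset, IsClosed]
    constructor
    · rintro ⟨hg, he⟩
      refine ⟨fun e heE => ?_, he⟩
      simp only [pairs, Finset.mem_filter, Finset.mem_univ, true_and]
      exact hg e heE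
    · rintro ⟨hsub, he⟩
      refine ⟨fun e heE => ?_, he⟩
      exact (Finset.mem_filter.mp (hsub heE)).2
  have hfin : (∑ᶠ E ∈ {E : Finset (Edge N) | IsClosed E}, wt β g E)
      = ∑ E ∈ (pairs N).powerset.filter fun E => ∀ v, Even (degree E v), wt β g E := by
    rw [hset, finsum_mem_coe_finset]
  -- Step 5: combine
  have hfinal : (∑ s : Fin N → Bool, Real.exp (hamil β g fun i => spin (s i)))
      = 2 ^ N * (C * ∑ᶠ E ∈ {E : Finset (Edge N) | IsClosed E}, wt β g E) := by
    rw [hsum, hfin]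
    simp_rw [hinner, ite_mul, zero_mul]
    rw [Finset.sum_ite, Finset.sum_const_zero, add_zero, ← Finset.mul_sum]
    ring
  rw [hfinal]
  field_simp

end SK
end

section
/- Large graphs have exponentially small L² mass: let 0 < β < 1. There exists a constant C = C_β > 0, independent of N, such that for every N ∈ ℕ and every integer k ≥ 0, 𝔼[ ( Σ_{γ∈Γ_sc : |γ| ≥ k} w(γ) )² ] ≤ C exp( −k log(1/β) ). -/
open MeasureTheory ProbabilityTheory Filter Topology
open scoped NNReal ENNReal

namespace SK

variable {N : ℕ}

/-! ### Auxiliary lemmas for the proof -/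

section Aux

open Real

lemma sk_measurable_tanh : Measurable Real.tanh := by
  have h : Continuous Real.tanh := by
    have := Real.continuous_sinh.div Real.continuous_cosh (fun x => (Real.cosh_pos x).ne')
    rw [show Real.tanh = fun x => Real.sinh x / Real.cosh x from funext Real.tanh_eq_sinh_div_cosh]
    exact this
  exact h.measurable

lemma sk_tanh_sq_le_one (x : ℝ) : Real.tanh x ^ 2 ≤ 1 := by
  rw [Real.tanh_eq_sinh_div_cosh, div_pow, div_le_one (by positivity)]
  nlinarith [Real.cosh_sq x]

lemma sk_abs_tanh_le_one (x : ℝ) : |Real.tanh x| ≤ 1 := by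
  nlinarith [sk_tanh_sq_le_one x, abs_nonneg (Real.tanh x), sq_abs (Real.tanh x)]

lemma sk_tanh_sq_le (x : ℝ) : Real.tanh x ^ 2 ≤ 1 - Real.exp (-x ^ 2) := by
  have hc := Real.cosh_pos x
  have h2 : Real.exp (-x ^ 2) ≤ (Real.cosh x ^ 2)⁻¹ := by
    have h1 : Real.cosh x ^ 2 ≤ Real.exp (x ^ 2) := by
      have h := Real.cosh_le_exp_half_sq x
      have : Real.exp (x ^ 2 / 2) ^ 2 = Real.exp (x ^ 2) := by
        rw [sq, ← Real.exp_add]; ring_nf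
      nlinarith [hc.le]
    rw [Real.exp_neg]
    exact inv_anti₀ (by positivity) h1
  have h3 : Real.tanh x ^ 2 = 1 - (Real.cosh x ^ 2)⁻¹ := by
    rw [Real.tanh_eq_sinh_div_cosh, div_pow]
    have hs : Real.sinh x ^ 2 = Real.cosh x ^ 2 - 1 := by nlinarith [Real.cosh_sq x]
    field_simp [hs]
    exact hs
  linarith

lemma sk_integrable_exp_lin_quad (a b : ℝ) (hb : 0 < b) :
    MeasureTheory.Integrable (fun z => Real.exp (a * z - b * z ^ 2)) := by
  have key : ∀ z : ℝ, a * z - b * z ^ 2 = a ^ 2 / (4 * b) + -b * (z - a / (2 * b)) ^ 2 := by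
    intro z; field_simp; ring
  simp_rw [key, Real.exp_add]
  exact ((integrable_exp_neg_mul_sq hb).comp_sub_right (a / (2 * b))).const_mul _

lemma sk_integral_exp_lin_quad (a b : ℝ) (hb : 0 < b) :
    ∫ z : ℝ, Real.exp (a * z - b * z ^ 2) = Real.exp (a ^ 2 / (4 * b)) * Real.sqrt (π / b) := by
  have key : ∀ z : ℝ, a * z - b * z ^ 2 = a ^ 2 / (4 * b) + -b * (z - a / (2 * b)) ^ 2 := by
    intro z; field_simp; ring
  simp_rw [key, Real.exp_add]
  rw [MeasureTheory.integral_const_mul]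
  congr 1
  rw [MeasureTheory.integral_sub_right_eq_self (fun z => Real.exp (-b * z ^ 2)) (a / (2 * b))]
  exact integral_gaussian b

end Aux

section AuxComb

open Real

variable {N : ℕ}

lemma sk_spin_sq (b : Bool) : spin b ^ 2 = 1 := by cases b <;> simp [spin]

lemma sk_sum_spin_pow (d : ℕ) : ∑ b : Bool, spin b ^ d = if Even d then (2 : ℝ) else 0 := by
  rcases Nat.even_or_odd d with h | h
  · simp [Fintype.sum_bool, spin, h.neg_one_pow, if_pos h]
  · simp [Fintype.sum_bool, spin, h.neg_one_pow, if_neg (Nat.not_even_iff_odd.mpr h)]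

lemma sk_sum_prod_spin_pow (d : Fin N → ℕ) :
    ∑ s : Fin N → Bool, ∏ v, spin (s v) ^ d v
      = if ∀ v, Even (d v) then (2 : ℝ) ^ N else 0 := by
  classical
  have h := Finset.prod_univ_sum (fun _ : Fin N => (Finset.univ : Finset Bool))
      (fun v b => spin b ^ d v)
  rw [Fintype.piFinset_univ] at h
  rw [← h, show (∏ v, ∑ b : Bool, spin b ^ d v) = ∏ v, (if Even (d v) then (2:ℝ) else 0) from
    Finset.prod_congr rfl (fun v _ => sk_sum_spin_pow (d v))]
  by_cases h' : ∀ v, Even (d v)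
  · rw [if_pos h', Finset.prod_congr rfl (fun v _ => if_pos (h' v)), Finset.prod_const]
    simp
  · rw [if_neg h']
    push_neg at h'
    obtain ⟨v, hv⟩ := h'
    exact Finset.prod_eq_zero (Finset.mem_univ v) (by rw [if_neg hv])

lemma sk_prod_edge_eq_prod_pow (γ : Finset (Edge N)) (hγ : IsGraph γ) (σ : Fin N → ℝ) :
    ∏ e ∈ γ, σ e.1 * σ e.2 = ∏ v, σ v ^ degree γ v := by
  classical
  have step : ∀ e ∈ γ, σ e.1 * σ e.2 = ∏ v, (if e.1 = v ∨ e.2 = v then σ v else 1) := by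
    intro e he
    have hne : e.1 ≠ e.2 := ne_of_lt (hγ e he)
    rw [← Finset.prod_filter]
    have hf : Finset.univ.filter (fun v => e.1 = v ∨ e.2 = v) = {e.1, e.2} := by
      ext u
      simp only [Finset.mem_filter, Finset.mem_univ, true_and, Finset.mem_insert,
        Finset.mem_singleton]
      constructor
      · rintro (h | h) <;> [left; right] <;> exact h.symm
      · rintro (h | h) <;> [left; right] <;> exact h.symm
    rw [hf, Finset.prod_pair hne]
  rw [Finset.prod_congr rfl step, Finset.prod_comm]
  refine Finset.prod_congr rfl (fun v _ => ?_)
  rw [degree, ← Finset.prod_const (σ v), ← Finset.prod_filter]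

lemma sk_isGraph_iff_subset {γ : Finset (Edge N)} : IsGraph γ ↔ γ ⊆ pairs N := by
  constructor
  · intro h e he
    simp only [pairs, Finset.mem_filter, Finset.mem_univ, true_and]
    exact h e he
  · intro h e he
    have := h he
    simpa [pairs] using this

lemma sk_filter_mem_pairs {γ : Finset (Edge N)} (hγ : IsGraph γ) :
    (pairs N).filter (fun e => e ∈ γ) = γ := by
  ext e
  simp only [Finset.mem_filter]
  exact ⟨fun h => h.2, fun h => ⟨sk_isGraph_iff_subset.mp hγ h, h⟩⟩

lemma sk_sum_pairs_eq (σ : Fin N → ℝ) (hσ : ∀ v, σ v ^ 2 = 1) :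
    ∑ e ∈ pairs N, σ e.1 * σ e.2 = ((∑ v, σ v) ^ 2 - N) / 2 := by
  classical
  have expand : (∑ v, σ v) ^ 2 = ∑ e : Edge N, σ e.1 * σ e.2 := by
    rw [sq, Finset.sum_mul_sum, Fintype.sum_prod_type]
  have split1 := Finset.sum_filter_add_sum_filter_not (Finset.univ : Finset (Edge N))
      (fun e => e.1 = e.2) (fun e => σ e.1 * σ e.2)
  have split2 := Finset.sum_filter_add_sum_filter_not
      ((Finset.univ : Finset (Edge N)).filter (fun e => ¬ e.1 = e.2))
      (fun e => e.1 < e.2) (fun e => σ e.1 * σ e.2)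
  have hdiag : ∑ e ∈ (Finset.univ : Finset (Edge N)).filter (fun e => e.1 = e.2),
      σ e.1 * σ e.2 = (N : ℝ) := by
    rw [Finset.sum_nbij' (i := fun e : Edge N => e.1) (j := fun v : Fin N => (v, v))
      (t := Finset.univ) (g := fun v => σ v * σ v)]
    · rw [show ∑ v : Fin N, σ v * σ v = ∑ v : Fin N, (1:ℝ) from
        Finset.sum_congr rfl (fun v _ => by rw [← sq, hσ v])]
      simp
    · intro a _; exact Finset.mem_univ _
    · intro a _; simp
    · intro a ha; simp only [Finset.mem_filter] at ha; ext <;> simp [ha.2]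
    · intro a _; rfl
    · intro a ha; simp only [Finset.mem_filter] at ha; rw [ha.2]
  have hlt : ((Finset.univ : Finset (Edge N)).filter (fun e => ¬ e.1 = e.2)).filter
      (fun e => e.1 < e.2) = pairs N := by
    rw [Finset.filter_filter, pairs]
    exact Finset.filter_congr (fun e _ => by
      constructor
      · exact fun h => h.2
      · exact fun h => ⟨ne_of_lt h, h⟩)
  have hgt : ∑ e ∈ ((Finset.univ : Finset (Edge N)).filter (fun e => ¬ e.1 = e.2)).filter
      (fun e => ¬ e.1 < e.2), σ e.1 * σ e.2 = ∑ e ∈ pairs N, σ e.1 * σ e.2 := by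
    refine Finset.sum_nbij' (i := fun e : Edge N => (e.2, e.1)) (j := fun e : Edge N => (e.2, e.1))
      ?_ ?_ ?_ ?_ ?_
    · intro e he
      simp only [Finset.filter_filter, Finset.mem_filter, Finset.mem_univ, true_and] at he
      simp only [pairs, Finset.mem_filter, Finset.mem_univ, true_and]
      exact lt_of_le_of_ne (not_lt.mp he.2) (Ne.symm he.1)
    · intro e he
      simp only [pairs, Finset.mem_filter, Finset.mem_univ, true_and] at he
      simp only [Finset.filter_filter, Finset.mem_filter, Finset.mem_univ, true_and]
      exact ⟨ne_of_gt he, not_lt.mpr (le_of_lt he)⟩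
    · intro a _; rfl
    · intro a _; rfl
    · intro a _; exact mul_comm _ _
  have hP : ∑ e ∈ pairs N, σ e.1 * σ e.2 + ∑ e ∈ pairs N, σ e.1 * σ e.2
      = (∑ v, σ v) ^ 2 - N := by
    rw [expand, ← split1, ← split2, hlt, hgt, hdiag]; ring
  linarith

end AuxComb

section AuxPartition

open Real

variable {N : ℕ}

/-- The finset of simple closed graphs. -/
def closedFinset (N : ℕ) : Finset (Finset (Edge N)) :=
  (pairs N).powerset.filter fun γ => ∀ v, Even (degree γ v)

lemma sk_mem_closedFinset {γ : Finset (Edge N)} : γ ∈ closedFinset N ↔ IsClosed γ := by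
  simp only [closedFinset, Finset.mem_filter, Finset.mem_powerset, IsClosed,
    sk_isGraph_iff_subset]

lemma sk_closed_sum_eq (x : ℝ) :
    ∑ s : Fin N → Bool, ∏ e ∈ pairs N, (1 + x * (spin (s e.1) * spin (s e.2)))
      = (2 : ℝ) ^ N * ∑ γ ∈ closedFinset N, x ^ γ.card := by
  classical
  have expand : ∀ s : Fin N → Bool,
      ∏ e ∈ pairs N, (1 + x * (spin (s e.1) * spin (s e.2)))
        = ∑ γ ∈ (pairs N).powerset, x ^ γ.card * ∏ e ∈ γ, spin (s e.1) * spin (s e.2) := by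
    intro s
    rw [Finset.prod_congr rfl (fun e (_ : e ∈ pairs N) =>
      add_comm 1 (x * (spin (s e.1) * spin (s e.2)))), Finset.prod_add]
    refine Finset.sum_congr rfl fun γ hγ => ?_
    rw [Finset.prod_const_one, mul_one, Finset.prod_mul_distrib, Finset.prod_const]
  rw [Finset.sum_congr rfl (fun s _ => expand s), Finset.sum_comm]
  have inner : ∀ γ ∈ (pairs N).powerset,
      ∑ s : Fin N → Bool, x ^ γ.card * ∏ e ∈ γ, spin (s e.1) * spin (s e.2)
        = if ∀ v, Even (degree γ v) then x ^ γ.card * 2 ^ N else 0 := by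
    intro γ hγ
    have hγg : IsGraph γ := sk_isGraph_iff_subset.mpr (Finset.mem_powerset.mp hγ)
    rw [← Finset.mul_sum,
      Finset.sum_congr rfl (fun s _ => sk_prod_edge_eq_prod_pow γ hγg (fun v => spin (s v))),
      sk_sum_prod_spin_pow]
    split_ifs <;> simp
  rw [Finset.sum_congr rfl inner, Finset.sum_ite, Finset.sum_const_zero, add_zero]
  rw [show ((pairs N).powerset.filter fun γ => ∀ v, Even (degree γ v)) = closedFinset N from rfl]
  rw [Finset.mul_sum]
  exact Finset.sum_congr rfl fun γ _ => by ring

lemma sk_one_le_sqrt_aux {β : ℝ} (hβ0 : 0 < β) (hβ1 : β < 1) :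
    (1 : ℝ) ≤ Real.sqrt (1 / (1 - β)) := by
  have h : (1:ℝ) ≤ 1 / (1 - β) := by
    rw [le_div_iff₀ (by linarith)]; linarith
  simpa using Real.sqrt_le_sqrt h

lemma sk_partition_bound {β : ℝ} (hβ0 : 0 < β) (hβ1 : β < 1) :
    ∑ γ ∈ closedFinset N, (β / N) ^ γ.card ≤ Real.sqrt (1 / (1 - β)) := by
  classical
  rcases Nat.eq_zero_or_pos N with rfl | hN
  · have hce : closedFinset 0 = {∅} := by
      ext γ
      simp only [Finset.mem_singleton, sk_mem_closedFinset]
      constructor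
      · intro _; exact Finset.eq_empty_of_isEmpty γ
      · rintro rfl
        exact ⟨fun e he => absurd he (by simp), fun v => by simp [degree]⟩
    rw [hce]
    simpa using sk_one_le_sqrt_aux hβ0 hβ1
  · have hn1 : (1 : ℝ) ≤ (N : ℝ) := by exact_mod_cast hN
    have hn0 : (0 : ℝ) < (N : ℝ) := by linarith
    set x : ℝ := β / N with hx
    have hx0 : 0 < x := by positivity
    have hx1 : x ≤ β := by
      rw [hx]; exact div_le_self hβ0.le hn1
    set b : ℝ := N / (2 * β) with hb
    have hb0 : 0 < b := by positivity
    have hbn : 0 < b - N / 2 := by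
      rw [hb]
      rw [sub_pos, div_lt_div_iff₀ (by positivity) (by positivity)]
      nlinarith
    -- Step 1: per-configuration bound by the Gaussian-linearized integral
    have hspin : ∀ (bo : Bool), spin bo = 1 ∨ spin bo = -1 := by
      intro bo; cases bo <;> simp [spin]
    have step2 : ∀ s : Fin N → Bool,
        ∏ e ∈ pairs N, (1 + x * (spin (s e.1) * spin (s e.2)))
          ≤ Real.exp ((∑ v, spin (s v)) ^ 2 / (4 * b)) := by
      intro s
      have hmul : ∀ e : Edge N, spin (s e.1) * spin (s e.2) = 1 ∨
          spin (s e.1) * spin (s e.2) = -1 := by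
        intro e
        rcases hspin (s e.1) with h1 | h1 <;> rcases hspin (s e.2) with h2 | h2 <;>
          simp [h1, h2]
      have h1 : ∏ e ∈ pairs N, (1 + x * (spin (s e.1) * spin (s e.2)))
          ≤ ∏ e ∈ pairs N, Real.exp (x * (spin (s e.1) * spin (s e.2))) := by
        refine Finset.prod_le_prod (fun e _ => ?_) (fun e _ => ?_)
        · rcases hmul e with h | h <;> rw [h] <;> nlinarith
        · linarith [Real.add_one_le_exp (x * (spin (s e.1) * spin (s e.2)))]
      rw [← Real.exp_sum, ← Finset.mul_sum,
        sk_sum_pairs_eq (fun v => spin (s v)) (fun v => sk_spin_sq (s v))] at h1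
      refine h1.trans (Real.exp_le_exp.mpr ?_)
      have hbx : x * (4 * b) = 2 := by
        rw [hx, hb]; field_simp; ring
      rw [le_div_iff₀ (by positivity : (0:ℝ) < 4 * b)]
      have hre : x * (((∑ v, spin (s v)) ^ 2 - ↑N) / 2) * (4 * b)
          = x * (4 * b) * (((∑ v, spin (s v)) ^ 2 - ↑N) / 2) := by ring
      rw [hre, hbx]
      have hS := sq_nonneg (∑ v, spin (s v))
      linarith
    -- Step 2: Gaussian linearization
    have step3 : ∀ s : Fin N → Bool,
        Real.exp ((∑ v, spin (s v)) ^ 2 / (4 * b))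
          = (Real.sqrt (π / b))⁻¹ * ∫ z : ℝ, Real.exp ((∑ v, spin (s v)) * z - b * z ^ 2) := by
      intro s
      rw [sk_integral_exp_lin_quad _ b hb0]
      have hs0 : (0:ℝ) < Real.sqrt (π / b) := Real.sqrt_pos.mpr (by positivity)
      field_simp
    have h1β : (0:ℝ) < 1 - β := by linarith
    have hs0 : (0:ℝ) < Real.sqrt (π / b) := Real.sqrt_pos.mpr (by positivity)
    -- sum over configurations inside the integral
    have hinner : ∀ z : ℝ,
        ∑ s : Fin N → Bool, Real.exp ((∑ v, spin (s v)) * z - b * z ^ 2)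
          = Real.exp (-(b * z ^ 2)) * (Real.exp z + Real.exp (-z)) ^ N := by
      intro z
      have h1 : ∀ s : Fin N → Bool, Real.exp ((∑ v, spin (s v)) * z - b * z ^ 2)
          = (∏ v, Real.exp (spin (s v) * z)) * Real.exp (-(b * z ^ 2)) := by
        intro s
        rw [← Real.exp_sum, ← Real.exp_add, ← Finset.sum_mul]
        ring_nf
      rw [Finset.sum_congr rfl (fun s _ => h1 s), ← Finset.sum_mul, mul_comm]
      congr 1
      have h2 := Finset.prod_univ_sum (fun _ : Fin N => (Finset.univ : Finset Bool))
        (fun (_ : Fin N) (bo : Bool) => Real.exp (spin bo * z))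
      rw [Fintype.piFinset_univ] at h2
      rw [← h2]
      have h3 : ∀ v : Fin N, (∑ bo : Bool, Real.exp (spin bo * z))
          = Real.exp z + Real.exp (-z) := by
        intro v
        rw [Fintype.sum_bool]
        simp [spin, one_mul, neg_one_mul]
      rw [Finset.prod_congr rfl (fun v _ => h3 v), Finset.prod_const, Finset.card_univ,
        Fintype.card_fin]
    -- pointwise domination of the integrand
    have hptwise : ∀ z : ℝ,
        Real.exp (-(b * z ^ 2)) * (Real.exp z + Real.exp (-z)) ^ N
          ≤ (2:ℝ) ^ N * Real.exp (-(b - N / 2) * z ^ 2) := by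
      intro z
      have hch : Real.exp z + Real.exp (-z) = 2 * Real.cosh z := by
        rw [Real.cosh_eq]; ring
      have hchpow : (Real.exp z + Real.exp (-z)) ^ N
          ≤ (2:ℝ) ^ N * Real.exp ((N : ℝ) * (z ^ 2 / 2)) := by
        rw [hch, mul_pow]
        refine mul_le_mul_of_nonneg_left ?_ (by positivity)
        rw [Real.exp_nat_mul]
        exact pow_le_pow_left₀ (Real.cosh_pos z).le (Real.cosh_le_exp_half_sq z) N
      calc Real.exp (-(b * z ^ 2)) * (Real.exp z + Real.exp (-z)) ^ N
          ≤ Real.exp (-(b * z ^ 2)) * ((2:ℝ) ^ N * Real.exp ((N : ℝ) * (z ^ 2 / 2))) :=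
            mul_le_mul_of_nonneg_left hchpow (Real.exp_nonneg _)
        _ = (2:ℝ) ^ N * Real.exp (-(b - N / 2) * z ^ 2) := by
            rw [mul_comm (Real.exp _), mul_assoc, ← Real.exp_add]
            congr 2
            ring
    -- integrability facts
    have hint1 : ∀ s : Fin N → Bool,
        MeasureTheory.Integrable (fun z : ℝ => Real.exp ((∑ v, spin (s v)) * z - b * z ^ 2)) :=
      fun s => sk_integrable_exp_lin_quad _ b hb0
    -- the chain of inequalities
    have key := sk_closed_sum_eq (N := N) x
    have h2N : (0:ℝ) < (2:ℝ) ^ N := by positivity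
    have main : ∑ γ ∈ closedFinset N, x ^ γ.card
        ≤ ((2:ℝ) ^ N)⁻¹ * ((Real.sqrt (π / b))⁻¹ *
            ((2:ℝ) ^ N * Real.sqrt (π / (b - N / 2)))) := by
      have hA : (2:ℝ) ^ N * ∑ γ ∈ closedFinset N, x ^ γ.card
          ≤ (Real.sqrt (π / b))⁻¹ * ((2:ℝ) ^ N * Real.sqrt (π / (b - N / 2))) := by
        rw [← key]
        have hB : ∑ s : Fin N → Bool,
            ∏ e ∈ pairs N, (1 + x * (spin (s e.1) * spin (s e.2)))
            ≤ ∑ s : Fin N → Bool, Real.exp ((∑ v, spin (s v)) ^ 2 / (4 * b)) :=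
          Finset.sum_le_sum (fun s _ => step2 s)
        refine hB.trans ?_
        rw [Finset.sum_congr rfl (fun s (_ : s ∈ Finset.univ) => step3 s), ← Finset.mul_sum]
        refine mul_le_mul_of_nonneg_left ?_ (by positivity)
        rw [← MeasureTheory.integral_finset_sum _ (fun s _ => hint1 s)]
        have hend : ∫ z : ℝ, ∑ s : Fin N → Bool,
            Real.exp ((∑ v, spin (s v)) * z - b * z ^ 2)
            ≤ ∫ z : ℝ, (2:ℝ) ^ N * Real.exp (-(b - N / 2) * z ^ 2) := by
          refine MeasureTheory.integral_mono_of_nonneg ?_ ?_ ?_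
          · exact Filter.Eventually.of_forall fun z =>
              Finset.sum_nonneg fun s _ => (Real.exp_nonneg _)
          · exact (integrable_exp_neg_mul_sq hbn).const_mul _
          · exact Filter.Eventually.of_forall fun z =>
              le_of_eq_of_le (hinner z) (hptwise z)
        refine hend.trans ?_
        rw [MeasureTheory.integral_const_mul, integral_gaussian]
      calc ∑ γ ∈ closedFinset N, x ^ γ.card
          = ((2:ℝ) ^ N)⁻¹ * ((2:ℝ) ^ N * ∑ γ ∈ closedFinset N, x ^ γ.card) := by
            rw [inv_mul_cancel_left₀ h2N.ne']
        _ ≤ _ := mul_le_mul_of_nonneg_left hA (by positivity)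
    refine main.trans ?_
    have hkey : π / (b - N / 2) = (π / b) * (1 / (1 - β)) := by
      rw [hb]
      rw [div_mul_div_comm, mul_one]
      congr 1
      field_simp
    rw [hkey, Real.sqrt_mul (by positivity)]
    rw [show ((2:ℝ) ^ N)⁻¹ * ((Real.sqrt (π / b))⁻¹ *
        ((2:ℝ) ^ N * (Real.sqrt (π / b) * Real.sqrt (1 / (1 - β)))))
        = Real.sqrt (1 / (1 - β)) * (((2:ℝ) ^ N)⁻¹ * (2:ℝ) ^ N) *
          ((Real.sqrt (π / b))⁻¹ * Real.sqrt (π / b)) from by ring]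
    rw [inv_mul_cancel₀ h2N.ne', inv_mul_cancel₀ hs0.ne']
    simp

end AuxPartition

section AuxProb

open Real

variable {N : ℕ}

lemma sk_integrable_of_abs_le {α : Type*} [MeasurableSpace α] {μ : MeasureTheory.Measure α}
    [MeasureTheory.IsFiniteMeasure μ] {f : α → ℝ} (hf : MeasureTheory.AEStronglyMeasurable f μ)
    {C : ℝ} (h : ∀ a, |f a| ≤ C) : MeasureTheory.Integrable f μ :=
  ⟨hf, MeasureTheory.HasFiniteIntegral.of_bounded (C := C)
    (Filter.Eventually.of_forall (fun a => by simpa [Real.norm_eq_abs] using h a))⟩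

lemma sk_integral_gauss_pdf (f : ℝ → ℝ) {v : ℝ≥0} (hv : v ≠ 0) :
    ∫ x, f x ∂(gaussianReal 0 v) = ∫ x, gaussianPDFReal 0 v x * f x := by
  rw [gaussianReal_of_var_ne_zero 0 hv, gaussianPDF_def]
  rw [show (fun x => ENNReal.ofReal (gaussianPDFReal 0 v x))
      = (fun x => ((Real.toNNReal (gaussianPDFReal 0 v x) : ℝ≥0) : ℝ≥0∞)) from rfl]
  rw [integral_withDensity_eq_integral_smul
    ((measurable_gaussianPDFReal 0 v).real_toNNReal) f]
  refine MeasureTheory.integral_congr_ae (Filter.Eventually.of_forall fun x => ?_)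
  simp [NNReal.smul_def, Real.coe_toNNReal _ (gaussianPDFReal_nonneg 0 v x)]

lemma sk_gaussPDF_even {v : ℝ≥0} (x : ℝ) :
    gaussianPDFReal 0 v (-x) = gaussianPDFReal 0 v x := by
  simp [gaussianPDFReal, sub_zero, neg_sq]

lemma sk_integral_tanh_gauss (βr : ℝ) {v : ℝ≥0} (hv : v ≠ 0) :
    ∫ x, Real.tanh (βr * x) ∂(gaussianReal 0 v) = 0 := by
  rw [sk_integral_gauss_pdf _ hv]
  set f : ℝ → ℝ := fun x => gaussianPDFReal 0 v x * Real.tanh (βr * x) with hf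
  have hodd : ∀ x, f (-x) = - f x := by
    intro x
    show gaussianPDFReal 0 v (-x) * Real.tanh (βr * -x)
      = -(gaussianPDFReal 0 v x * Real.tanh (βr * x))
    rw [sk_gaussPDF_even, mul_neg, Real.tanh_neg, mul_neg]
  have hswap : ∫ x, f x = ∫ x, f (-x) := by
    conv_lhs => rw [← MeasureTheory.Measure.map_neg_eq_self (MeasureTheory.volume : MeasureTheory.Measure ℝ)]
    have hcoe : (Neg.neg : ℝ → ℝ) = ⇑(MeasurableEquiv.neg ℝ) := rfl
    rw [hcoe, MeasureTheory.integral_map_equiv]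
  have hzero : ∫ x, f x = - ∫ x, f x := by
    conv_lhs => rw [hswap]
    rw [show (fun x => f (-x)) = fun x => - f x from funext hodd, MeasureTheory.integral_neg]
  linarith

lemma sk_integral_tanh_sq_gauss_le {βr : ℝ} {v : ℝ≥0} (hv : v ≠ 0) :
    ∫ x, Real.tanh (βr * x) ^ 2 ∂(gaussianReal 0 v) ≤ (v : ℝ) * βr ^ 2 := by
  have hv0 : (0 : ℝ) < (v : ℝ) := NNReal.coe_pos.mpr (pos_iff_ne_zero.mpr hv)
  have htanhm : Measurable fun x : ℝ => Real.tanh (βr * x) :=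
    sk_measurable_tanh.comp (measurable_id.const_mul βr)
  have hexpm : Measurable fun x : ℝ => Real.exp (-(βr * x) ^ 2) :=
    (Real.continuous_exp.measurable).comp
      (((measurable_id.const_mul βr).pow_const 2).neg)
  have hexple : ∀ x : ℝ, Real.exp (-(βr * x) ^ 2) ≤ 1 := by
    intro x
    calc Real.exp (-(βr * x) ^ 2) ≤ Real.exp 0 :=
          Real.exp_le_exp.mpr (neg_nonpos.mpr (sq_nonneg _))
      _ = 1 := Real.exp_zero
  have hint1 : MeasureTheory.Integrable (fun x => Real.tanh (βr * x) ^ 2) (gaussianReal 0 v) :=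
    sk_integrable_of_abs_le ((htanhm.pow_const 2).aestronglyMeasurable) (C := 1)
      (fun x => by rw [abs_of_nonneg (sq_nonneg _)]; exact sk_tanh_sq_le_one _)
  have hint2 : MeasureTheory.Integrable (fun x => Real.exp (-(βr * x) ^ 2)) (gaussianReal 0 v) :=
    sk_integrable_of_abs_le hexpm.aestronglyMeasurable (C := 1)
      (fun x => by rw [abs_of_nonneg (Real.exp_nonneg _)]; exact hexple x)
  have hint3 : MeasureTheory.Integrable (fun x => 1 - Real.exp (-(βr * x) ^ 2)) (gaussianReal 0 v) :=
    (MeasureTheory.integrable_const 1).sub hint2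
  have step1 : ∫ x, Real.tanh (βr * x) ^ 2 ∂(gaussianReal 0 v)
      ≤ ∫ x, (1 - Real.exp (-(βr * x) ^ 2)) ∂(gaussianReal 0 v) :=
    MeasureTheory.integral_mono hint1 hint3 (fun x => sk_tanh_sq_le (βr * x))
  have step2 : ∫ x, (1 - Real.exp (-(βr * x) ^ 2)) ∂(gaussianReal 0 v)
      = 1 - ∫ x, Real.exp (-(βr * x) ^ 2) ∂(gaussianReal 0 v) := by
    rw [MeasureTheory.integral_sub (MeasureTheory.integrable_const 1) hint2]
    simp
  set c : ℝ := βr ^ 2 + 1 / (2 * (v : ℝ)) with hc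
  have hc0 : 0 < c := by positivity
  have step3 : ∫ x, Real.exp (-(βr * x) ^ 2) ∂(gaussianReal 0 v)
      = (Real.sqrt (2 * π * (v : ℝ)))⁻¹ * Real.sqrt (π / c) := by
    rw [sk_integral_gauss_pdf _ hv]
    have hptw : ∀ x : ℝ, gaussianPDFReal 0 v x * Real.exp (-(βr * x) ^ 2)
        = (Real.sqrt (2 * π * (v : ℝ)))⁻¹ * Real.exp (-c * x ^ 2) := by
      intro x
      rw [gaussianPDFReal]
      rw [mul_assoc, ← Real.exp_add]
      congr 2
      rw [hc]
      field_simp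
      ring
    rw [MeasureTheory.integral_congr_ae (Filter.Eventually.of_forall hptw),
      MeasureTheory.integral_const_mul, integral_gaussian]
  have step4 : (Real.sqrt (2 * π * (v : ℝ)))⁻¹ * Real.sqrt (π / c)
      = Real.sqrt (1 / (1 + 2 * (v : ℝ) * βr ^ 2)) := by
    have h2vc : (2 * π * (v : ℝ)) * (1 / (1 + 2 * (v : ℝ) * βr ^ 2)) = π / c := by
      rw [hc]; field_simp; ring
    have e1 : Real.sqrt (2 * π * (v : ℝ) * (1 / (1 + 2 * (v : ℝ) * βr ^ 2)))
        = Real.sqrt (2 * π * (v : ℝ)) * Real.sqrt (1 / (1 + 2 * (v : ℝ) * βr ^ 2)) :=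
      Real.sqrt_mul (by positivity) _
    rw [← h2vc, e1, ← mul_assoc,
      inv_mul_cancel₀ (by positivity : Real.sqrt (2 * π * (v : ℝ)) ≠ 0), one_mul]
  set u : ℝ := 2 * (v : ℝ) * βr ^ 2 with hu
  have hu0 : 0 ≤ u := by positivity
  have step5 : 1 - Real.sqrt (1 / (1 + u)) ≤ u / 2 := by
    rcases le_or_gt u 2 with hu2 | hu2
    · have hnn : (0:ℝ) ≤ 1 - u / 2 := by linarith
      have hsq : 1 - u / 2 ≤ Real.sqrt (1 / (1 + u)) := by
        rw [Real.le_sqrt hnn (by positivity)]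
        rw [le_div_iff₀ (by positivity : (0:ℝ) < 1 + u)]
        nlinarith [mul_nonneg (mul_nonneg hu0 hu0) (sub_nonneg.mpr hu2)]
      linarith
    · have : (0:ℝ) ≤ Real.sqrt (1 / (1 + u)) := Real.sqrt_nonneg _
      linarith
  have hfin : (v : ℝ) * βr ^ 2 = u / 2 := by rw [hu]; ring
  calc ∫ x, Real.tanh (βr * x) ^ 2 ∂(gaussianReal 0 v)
      ≤ 1 - ∫ x, Real.exp (-(βr * x) ^ 2) ∂(gaussianReal 0 v) := by
        rw [← step2]; exact step1
    _ = 1 - Real.sqrt (1 / (1 + u)) := by rw [step3, step4]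
    _ ≤ u / 2 := step5
    _ = (v : ℝ) * βr ^ 2 := hfin.symm

lemma sk_indep_integral_prod {Ω : Type} [MeasureSpace Ω]
    [MeasureTheory.IsProbabilityMeasure (ℙ : MeasureTheory.Measure Ω)]
    {ι : Type*} (X : ι → Ω → ℝ)
    (h : iIndepFun X ℙ) (hm : ∀ i, Measurable (X i)) (s : Finset ι) :
    ∫ ω, ∏ i ∈ s, X i ω ∂ℙ = ∏ i ∈ s, ∫ ω, X i ω ∂ℙ := by
  classical
  induction s using Finset.cons_induction with
  | empty => simp
  | cons a s ha ih =>
    have hindep : IndepFun (∏ j ∈ s, X j) (X a) ℙ :=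
      h.indepFun_finsetProd_of_notMem hm ha
    have hmeas : Measurable fun ω => ∏ j ∈ s, X j ω := Finset.measurable_prod s fun i _ => hm i
    have hps : (∏ j ∈ s, X j) = fun ω => ∏ j ∈ s, X j ω := by
      funext ω; exact Finset.prod_apply ω s X
    have hs : MeasureTheory.AEStronglyMeasurable (∏ j ∈ s, X j) ℙ := by
      rw [hps]; exact hmeas.aestronglyMeasurable
    have hmul := hindep.integral_mul_eq_mul_integral hs (hm a).aestronglyMeasurable
    calc ∫ ω, ∏ i ∈ Finset.cons a s ha, X i ω ∂ℙ
        = ∫ ω, ((∏ j ∈ s, X j) * X a) ω ∂ℙ := by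
          refine MeasureTheory.integral_congr_ae (Filter.Eventually.of_forall fun ω => ?_)
          simp only [Finset.prod_cons, Finset.prod_apply, Pi.mul_apply]
          ring
      _ = (∫ ω, (∏ j ∈ s, X j) ω ∂ℙ) * ∫ ω, X a ω ∂ℙ := hmul
      _ = (∏ i ∈ s, ∫ ω, X i ω ∂ℙ) * ∫ ω, X a ω ∂ℙ := by rw [hps, ih]
      _ = ∏ i ∈ Finset.cons a s ha, ∫ ω, X i ω ∂ℙ := by
          rw [Finset.prod_cons]; ring

lemma sk_prod_subtype_ite {γ : Finset (Edge N)} (hγ : IsGraph γ) (f : Edge N → ℝ) :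
    (∏ e : {e : Edge N // e.1 < e.2}, if (e : Edge N) ∈ γ then f (e : Edge N) else 1)
      = ∏ e ∈ γ, f e := by
  classical
  rw [← Finset.prod_subtype (pairs N) (fun e => by simp [pairs])
      (fun e => if e ∈ γ then f e else 1)]
  rw [← Finset.prod_filter, sk_filter_mem_pairs hγ]

lemma sk_wt_eq (βr : ℝ) (G : Fin N → Fin N → ℝ) {γ : Finset (Edge N)} (hγ : IsGraph γ) :
    wt βr G γ = ∏ e : {e : Edge N // e.1 < e.2},
      (if (e : Edge N) ∈ γ then Real.tanh (βr * G (e : Edge N).1 (e : Edge N).2) else 1) := by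
  rw [wt, ← sk_prod_subtype_ite hγ (fun e => Real.tanh (βr * G e.1 e.2))]

lemma sk_integral_wt_mul_wt {Ω : Type} [MeasureSpace Ω] {g : Ω → Fin N → Fin N → ℝ}
    (hg : IsSKCoupling N g) (βr : ℝ) {γ τ : Finset (Edge N)}
    (hγ : IsGraph γ) (hτ : IsGraph τ) :
    ∫ ω, wt βr (g ω) γ * wt βr (g ω) τ ∂ℙ
      = if γ = τ
        then (∫ x, Real.tanh (βr * x) ^ 2 ∂(gaussianReal 0 ((N : ℝ≥0))⁻¹)) ^ γ.card
        else 0 := by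
  classical
  obtain ⟨hprob, hmeas, hsymm, hdiag, hmap, hindep⟩ := hg
  haveI := hprob
  have htanhm : Measurable fun x : ℝ => Real.tanh (βr * x) :=
    sk_measurable_tanh.comp (measurable_id.const_mul βr)
  set φ : {e : Edge N // e.1 < e.2} → ℝ → ℝ := fun e x =>
    (if (e : Edge N) ∈ γ then Real.tanh (βr * x) else 1) *
    (if (e : Edge N) ∈ τ then Real.tanh (βr * x) else 1) with hφ
  have hφm : ∀ e, Measurable (φ e) := by
    intro e
    apply Measurable.mul <;> (split_ifs <;> first | exact htanhm | exact measurable_const)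
  set X : {e : Edge N // e.1 < e.2} → Ω → ℝ := fun e ω => g ω (e : Edge N).1 (e : Edge N).2
    with hX
  have hXm : ∀ e, Measurable (X e) := fun e => hmeas _ _
  have hY : iIndepFun (fun e => φ e ∘ X e) ℙ := hindep.comp φ hφm
  have hkey : ∀ ω : Ω, wt βr (g ω) γ * wt βr (g ω) τ
      = ∏ e : {e : Edge N // e.1 < e.2}, (φ e ∘ X e) ω := by
    intro ω
    rw [sk_wt_eq βr (g ω) hγ, sk_wt_eq βr (g ω) hτ, ← Finset.prod_mul_distrib]
    rfl
  have hmain : ∫ ω, wt βr (g ω) γ * wt βr (g ω) τ ∂ℙ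
      = ∏ e : {e : Edge N // e.1 < e.2}, ∫ ω, φ e (X e ω) ∂ℙ := by
    rw [show (fun ω => wt βr (g ω) γ * wt βr (g ω) τ)
        = fun ω => ∏ e : {e : Edge N // e.1 < e.2}, (φ e ∘ X e) ω from funext hkey]
    exact sk_indep_integral_prod _ hY (fun e => (hφm e).comp (hXm e)) Finset.univ
  have hedge : ∀ e : {e : Edge N // e.1 < e.2}, ∫ ω, φ e (X e ω) ∂ℙ
      = ∫ x, φ e x ∂(gaussianReal 0 ((N : ℝ≥0))⁻¹) := by
    intro e
    rw [← hmap (e : Edge N).1 (e : Edge N).2 e.2]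
    exact (MeasureTheory.integral_map (hXm e).aemeasurable (hφm e).aestronglyMeasurable).symm
  by_cases hne : γ = τ
  · subst hne
    rw [if_pos rfl, hmain]
    have hφγ : ∀ e : {e : Edge N // e.1 < e.2}, ∫ ω, φ e (X e ω) ∂ℙ
        = (if (e : Edge N) ∈ γ
            then (∫ x, Real.tanh (βr * x) ^ 2 ∂(gaussianReal 0 ((N : ℝ≥0))⁻¹)) else 1) := by
      intro e
      rw [hedge e]
      by_cases hmem : (e : Edge N) ∈ γ
      · rw [if_pos hmem]
        exact MeasureTheory.integral_congr_ae (Filter.Eventually.of_forall fun x => by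
          simp [hφ, hmem, sq])
      · rw [if_neg hmem]
        rw [MeasureTheory.integral_congr_ae (Filter.Eventually.of_forall
          (fun x => by simp [hφ, hmem] : ∀ x : ℝ, φ e x = 1))]
        simp
    rw [Finset.prod_congr rfl (fun e _ => hφγ e),
      sk_prod_subtype_ite hγ
        (fun _ => ∫ x, Real.tanh (βr * x) ^ 2 ∂(gaussianReal 0 ((N : ℝ≥0))⁻¹)),
      Finset.prod_const]
  · rw [if_neg hne, hmain]
    have hsep : ∃ e : Edge N, (e ∈ γ ∧ e ∉ τ) ∨ (e ∈ τ ∧ e ∉ γ) := by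
      by_contra hcon
      push_neg at hcon
      exact hne (Finset.ext fun e => ⟨fun he => (hcon e).1 he, fun he => (hcon e).2 he⟩)
    obtain ⟨e₀, he₀⟩ := hsep
    have hlt : e₀.1 < e₀.2 := by
      rcases he₀ with ⟨h1, _⟩ | ⟨h1, _⟩
      exacts [hγ _ h1, hτ _ h1]
    have hN0 : (N : ℝ≥0) ≠ 0 := by
      have hpos : 0 < N := e₀.1.pos
      exact_mod_cast hpos.ne'
    have hvne : ((N : ℝ≥0))⁻¹ ≠ 0 := inv_ne_zero hN0
    refine Finset.prod_eq_zero (Finset.mem_univ (⟨e₀, hlt⟩ : {e : Edge N // e.1 < e.2})) ?_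
    rw [hedge ⟨e₀, hlt⟩]
    rcases he₀ with ⟨h1, h2⟩ | ⟨h1, h2⟩
    · rw [MeasureTheory.integral_congr_ae (Filter.Eventually.of_forall
        (fun x => by simp [hφ, h1, h2] : ∀ x : ℝ, φ ⟨e₀, hlt⟩ x = Real.tanh (βr * x)))]
      exact sk_integral_tanh_gauss βr hvne
    · rw [MeasureTheory.integral_congr_ae (Filter.Eventually.of_forall
        (fun x => by simp [hφ, h1, h2] : ∀ x : ℝ, φ ⟨e₀, hlt⟩ x = Real.tanh (βr * x)))]
      exact sk_integral_tanh_gauss βr hvne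

end AuxProb


/-- for `0 < β < 1`, large graphs have exponentially small `L²` mass:
there is `C = C_β > 0`, independent of `N`, with
`𝔼[(∑_{γ ∈ Γ_sc, |γ| ≥ k} w(γ))²] ≤ C exp(-k log(1/β))` for all `N` and `k ≥ 0`. -/
theorem large_graphs_small_L2
    (β : ℝ) (hβ0 : 0 < β) (hβ1 : β < 1)
    (Ω : ℕ → Type) [∀ N, MeasureSpace (Ω N)]
    (g : ∀ N, Ω N → Fin N → Fin N → ℝ)
    (hg : ∀ N, IsSKCoupling N (g N)) :
    ∃ C : ℝ, 0 < C ∧ ∀ (N : ℕ) (k : ℕ),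
      (∫ ω, (∑ᶠ E ∈ {E : Finset (Edge N) | IsClosed E ∧ k ≤ E.card},
          wt β (g N ω) E) ^ 2 ∂ℙ)
        ≤ C * Real.exp (-(k : ℝ) * Real.log (1 / β)) := by
  classical
  have h1β : (0:ℝ) < 1 - β := by linarith
  refine ⟨Real.sqrt (1 / (1 - β)), Real.sqrt_pos.mpr (by positivity), ?_⟩
  intro N k
  haveI := (hg N).1
  have hrhs : Real.exp (-(k : ℝ) * Real.log (1 / β)) = β ^ k := by
    rw [one_div, Real.log_inv, mul_neg, neg_mul, neg_neg, Real.exp_nat_mul, Real.exp_log hβ0]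
  set S : Finset (Finset (Edge N)) :=
    Finset.univ.filter (fun E => IsClosed E ∧ k ≤ E.card) with hS
  have hsetS : {E : Finset (Edge N) | IsClosed E ∧ k ≤ E.card} = ↑S := by
    ext E; simp [hS]
  have hmemS : ∀ γ ∈ S, IsClosed γ ∧ k ≤ γ.card := by
    intro γ hγ; simpa [hS] using hγ
  have hgraphS : ∀ γ ∈ S, IsGraph γ := fun γ hγ => (hmemS γ hγ).1.1
  have hwm : ∀ γ : Finset (Edge N), Measurable fun ω => wt β (g N ω) γ := by
    intro γ
    simp only [wt]
    exact Finset.measurable_prod γ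
      (fun e _ => sk_measurable_tanh.comp (((hg N).2.1 e.1 e.2).const_mul β))
  have hwabs : ∀ (γ : Finset (Edge N)) (ω : Ω N), |wt β (g N ω) γ| ≤ 1 := by
    intro γ ω
    rw [wt, Finset.abs_prod]
    exact Finset.prod_le_one (fun e _ => abs_nonneg _) (fun e _ => sk_abs_tanh_le_one _)
  have hint : ∀ γ τ : Finset (Edge N),
      MeasureTheory.Integrable (fun ω => wt β (g N ω) γ * wt β (g N ω) τ) ℙ := by
    intro γ τ
    refine sk_integrable_of_abs_le ((hwm γ).mul (hwm τ)).aestronglyMeasurable (C := 1) ?_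
    intro ω
    rw [abs_mul]
    exact mul_le_one₀ (hwabs γ ω) (abs_nonneg _) (hwabs τ ω)
  set q : ℝ := ∫ x, Real.tanh (β * x) ^ 2 ∂(gaussianReal 0 ((N : ℝ≥0))⁻¹) with hq
  have hq0 : 0 ≤ q := by
    rw [hq]; exact MeasureTheory.integral_nonneg (fun x => sq_nonneg _)
  have hstep : ∫ ω, (∑ γ ∈ S, wt β (g N ω) γ) ^ 2 ∂ℙ = ∑ γ ∈ S, q ^ γ.card := by
    have hexp : (fun ω => (∑ γ ∈ S, wt β (g N ω) γ) ^ 2)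
        = fun ω => ∑ γ ∈ S, ∑ τ ∈ S, wt β (g N ω) γ * wt β (g N ω) τ := by
      funext ω; rw [sq, Finset.sum_mul_sum]
    rw [hexp, MeasureTheory.integral_finset_sum S
      (fun γ _ => MeasureTheory.integrable_finset_sum S (fun τ _ => hint γ τ))]
    rw [Finset.sum_congr rfl (fun γ _ => MeasureTheory.integral_finset_sum S
      (fun τ _ => hint γ τ))]
    rw [Finset.sum_congr rfl (fun γ hγ => Finset.sum_congr rfl (fun τ hτ =>
      sk_integral_wt_mul_wt (hg N) β (hgraphS γ hγ) (hgraphS τ hτ)))]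
    refine Finset.sum_congr rfl (fun γ hγ => ?_)
    rw [Finset.sum_ite_eq S γ (fun _ => q ^ γ.card), if_pos hγ]
  have hterm : ∀ γ ∈ S, q ^ γ.card ≤ β ^ k * (β / N) ^ γ.card := by
    intro γ hγ
    rcases Finset.eq_empty_or_nonempty γ with rfl | ⟨e, he⟩
    · have hk0 : k = 0 := Nat.le_zero.mp (by simpa using (hmemS _ hγ).2)
      simp [hk0]
    · have hNpos : 0 < N := e.1.pos
      have hn1 : (1:ℝ) ≤ N := by exact_mod_cast hNpos
      have hvne : ((N : ℝ≥0))⁻¹ ≠ 0 := inv_ne_zero (by exact_mod_cast hNpos.ne')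
      have hqle : q ≤ β ^ 2 / N := by
        have h := sk_integral_tanh_sq_gauss_le (βr := β) hvne
        rw [hq]
        refine h.trans (le_of_eq ?_)
        rw [NNReal.coe_inv, NNReal.coe_natCast, inv_mul_eq_div]
      calc q ^ γ.card ≤ (β ^ 2 / N) ^ γ.card := pow_le_pow_left₀ hq0 hqle _
        _ = β ^ γ.card * (β / N) ^ γ.card := by
            rw [show β ^ 2 / (N:ℝ) = β * (β / N) from by ring, mul_pow]
        _ ≤ β ^ k * (β / N) ^ γ.card := by
            refine mul_le_mul_of_nonneg_right ?_ (by positivity)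
            exact pow_le_pow_of_le_one hβ0.le hβ1.le (hmemS _ hγ).2
  have hsum2 : ∑ γ ∈ S, q ^ γ.card ≤ β ^ k * ∑ γ ∈ closedFinset N, (β / N) ^ γ.card := by
    calc ∑ γ ∈ S, q ^ γ.card ≤ ∑ γ ∈ S, β ^ k * (β / N) ^ γ.card := Finset.sum_le_sum hterm
      _ = β ^ k * ∑ γ ∈ S, (β / N) ^ γ.card := by rw [Finset.mul_sum]
      _ ≤ β ^ k * ∑ γ ∈ closedFinset N, (β / N) ^ γ.card := by
          refine mul_le_mul_of_nonneg_left ?_ (by positivity)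
          refine Finset.sum_le_sum_of_subset_of_nonneg ?_ (fun γ _ _ => by positivity)
          intro γ hγ
          rw [sk_mem_closedFinset]
          exact (hmemS γ hγ).1
  simp only [hsetS, finsum_mem_coe_finset]
  rw [hstep, hrhs]
  calc ∑ γ ∈ S, q ^ γ.card ≤ β ^ k * ∑ γ ∈ closedFinset N, (β / N) ^ γ.card := hsum2
    _ ≤ β ^ k * Real.sqrt (1 / (1 - β)) := by
        refine mul_le_mul_of_nonneg_left (sk_partition_bound hβ0 hβ1) (by positivity)
    _ = Real.sqrt (1 / (1 - β)) * β ^ k := mul_comm _ _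


end SK
end

section
/- Injectivity of the gluing map on vertex-almost-disjoint pairs: fix N ∈ ℕ and i₁ ≠ i₂ in [N]. If (γ,τ) and (γ',τ') both belong to S_{i₁i₂} = { (γ,τ) ∈ Γ_loop × Γ_sc : {i₁,i₂} ∈ E_γ, |V_γ ∩ V_τ| ≤ 1 } and the edge-disjoint unions coincide, γ ∘ τ = γ' ∘ τ', then (γ,τ) = (γ',τ'). In other words, Φ(γ,τ) := γ ∘ τ restricted to S_{i₁i₂} is injective. -/
open MeasureTheory ProbabilityTheory Filter Topology
open scoped NNReal ENNReal

namespace SK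

variable {N : ℕ}

lemma mem_verts_iff {E : Finset (Edge N)} {v : Fin N} :
    v ∈ verts E ↔ ∃ e ∈ E, e.1 = v ∨ e.2 = v := by
  simp [verts, degree, Finset.card_pos, Finset.filter_nonempty_iff]

lemma verts_mono {S E : Finset (Edge N)} (h : S ⊆ E) : verts S ⊆ verts E := by
  intro v hv
  rw [mem_verts_iff] at hv ⊢
  obtain ⟨e, he, hi⟩ := hv
  exact ⟨e, h he, hi⟩

lemma degree_split {S E : Finset (Edge N)} (h : S ⊆ E) (v : Fin N) :
    degree S v + degree (E \ S) v = degree E v := by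
  unfold degree
  rw [← Finset.card_union_of_disjoint
    (Finset.disjoint_filter_filter Finset.disjoint_sdiff),
    ← Finset.filter_union, Finset.union_sdiff_of_subset h]

lemma handshake {E : Finset (Edge N)} (h : IsGraph E) :
    ∑ v, degree E v = 2 * E.card := by
  unfold degree
  simp_rw [Finset.card_filter]
  rw [Finset.sum_comm]
  rw [Finset.sum_congr rfl (fun e he => ?_), Finset.sum_const, smul_eq_mul, mul_comm]
  have hne : e.1 ≠ e.2 := ne_of_lt (h e he)
  have : (Finset.univ.filter fun v : Fin N => e.1 = v ∨ e.2 = v) = {e.1, e.2} := by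
    ext v
    simp [eq_comm, or_comm]
  rw [← Finset.card_filter]
  rw [this, Finset.card_insert_of_notMem (by simpa using hne), Finset.card_singleton]

lemma walk_cross {V : Type} {G : SimpleGraph V} (A : Set V) :
    ∀ {u w : V}, G.Walk u w → u ∈ A → w ∉ A →
      ∃ x y, G.Adj x y ∧ x ∈ A ∧ y ∉ A := by
  intro u w p
  induction p with
  | nil => intro h h'; exact absurd h h'
  | @cons u v w h p ih =>
    intro hu hw
    by_cases hv : v ∈ A
    · exact ih hv hw
    · exact ⟨u, v, h, hu, hv⟩

lemma glue_subset {γ τ γ' τ' : Finset (Edge N)} {e₀ : Edge N}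
    (hγ : IsCycle γ) (hγ' : IsCycle γ')
    (he : e₀ ∈ γ) (he' : e₀ ∈ γ')
    (hv : (verts γ ∩ verts τ).card ≤ 1)
    (hU : γ ∪ τ = γ' ∪ τ') : γ ⊆ γ' := by
  by_contra hns
  obtain ⟨e₂, he₂γ, he₂γ'⟩ := Finset.not_subset.mp hns
  set S : Finset (Edge N) := γ ∩ γ' with hSdef
  have hSγ : S ⊆ γ := Finset.inter_subset_left
  have hSγ' : S ⊆ γ' := Finset.inter_subset_right
  -- degree facts
  have hdegγ : ∀ v ∈ verts γ, degree γ v = 2 := hγ.2.2.2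
  have hdegγ' : ∀ v ∈ verts γ', degree γ' v = 2 := hγ'.2.2.2
  -- Claim 1: every vertex of odd S-degree lies in verts γ ∩ verts τ
  have claim1 : ∀ v : Fin N, Odd (degree S v) → v ∈ verts γ ∩ verts τ := by
    intro v hodd
    have hpos : 0 < degree S v := hodd.pos
    have hvS : v ∈ verts S := by simp [verts, hpos]
    have hvγ : v ∈ verts γ := verts_mono hSγ hvS
    have hsplit := degree_split hSγ v
    rw [hdegγ v hvγ] at hsplit
    have hdS1 : degree S v = 1 := by
      rcases Nat.lt_or_ge (degree S v) 2 with h2 | h2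
      · omega
      · exfalso
        have : degree S v = 2 := by omega
        rw [this] at hodd
        exact (by decide : ¬ Odd 2) hodd
    have hdC1 : degree (γ \ S) v = 1 := by omega
    -- incident edges
    have hone : 0 < (S.filter fun e => e.1 = v ∨ e.2 = v).card := by
      unfold degree at hdS1; omega
    obtain ⟨e₁, he₁⟩ := Finset.card_pos.mp hone
    rw [Finset.mem_filter] at he₁
    have hcone : 0 < ((γ \ S).filter fun e => e.1 = v ∨ e.2 = v).card := by
      unfold degree at hdC1; omega
    obtain ⟨e₃, he₃⟩ := Finset.card_pos.mp hcone
    rw [Finset.mem_filter, Finset.mem_sdiff] at he₃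
    have he₃γ' : e₃ ∉ γ' := fun h => he₃.1.2 (Finset.mem_inter.mpr ⟨he₃.1.1, h⟩)
    -- v ∈ verts γ'
    have hvγ' : v ∈ verts γ' := mem_verts_iff.mpr ⟨e₁, hSγ' he₁.1, he₁.2⟩
    -- a second edge of γ' at v
    have hcard2 : 1 < (γ'.filter fun e => e.1 = v ∨ e.2 = v).card := by
      have := hdegγ' v hvγ'; unfold degree at this; omega
    obtain ⟨f, hf, hfne⟩ := Finset.exists_mem_ne hcard2
      e₁
    rw [Finset.mem_filter] at hf
    have hfγτ : f ∈ γ ∪ τ := by rw [hU]; exact Finset.mem_union_left _ hf.1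
    rcases Finset.mem_union.mp hfγτ with hfγ | hfτ
    · exfalso
      -- three distinct edges of γ at v
      have hfe₃ : f ≠ e₃ := fun h => he₃γ' (h ▸ hf.1)
      have htriple : ({e₁, e₃, f} : Finset (Edge N)) ⊆
          γ.filter fun e => e.1 = v ∨ e.2 = v := by
        intro x hx
        simp only [Finset.mem_insert, Finset.mem_singleton] at hx
        rcases hx with rfl | rfl | rfl
        · exact Finset.mem_filter.mpr ⟨hSγ he₁.1, he₁.2⟩
        · exact Finset.mem_filter.mpr ⟨he₃.1.1, he₃.2⟩
        · exact Finset.mem_filter.mpr ⟨hfγ, hf.2⟩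
      have he₁e₃ : e₁ ≠ e₃ := fun h => he₃γ' (h ▸ hSγ' he₁.1)
      have hc3 : ({e₁, e₃, f} : Finset (Edge N)).card = 3 := by
        rw [Finset.card_insert_of_notMem (by simp [he₁e₃, hfne.symm]),
          Finset.card_insert_of_notMem (by simpa using hfe₃.symm),
          Finset.card_singleton]
      have := Finset.card_le_card htriple
      rw [hc3] at this
      have h2 := hdegγ v hvγ
      unfold degree at h2
      omega
    · exact Finset.mem_inter.mpr ⟨hvγ, mem_verts_iff.mpr ⟨f, hfτ, hf.2⟩⟩
  -- the set of odd-degree vertices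
  set O : Finset (Fin N) := Finset.univ.filter fun v => Odd (degree S v) with hOdef
  have hOsub : O ⊆ verts γ ∩ verts τ := by
    intro v hvO
    exact claim1 v (Finset.mem_filter.mp hvO).2
  have hOle : O.card ≤ 1 := le_trans (Finset.card_le_card hOsub) hv
  -- parity: the sum of S-degrees is even
  have hSgraph : IsGraph S := fun e heS => hγ.1 e (hSγ heS)
  have heven : Even (∑ v, degree S v) := by
    rw [handshake hSgraph]; exact ⟨S.card, two_mul _⟩
  have hsplitsum := Finset.sum_filter_add_sum_filter_not Finset.univ
    (fun v => Odd (degree S v)) (fun v => degree S v)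
  rw [← hOdef] at hsplitsum
  have hevenO : Even (∑ v ∈ O, degree S v) := by
    have h2 : Even (∑ v ∈ Finset.univ.filter fun v => ¬ Odd (degree S v),
        degree S v) := by
      apply Finset.even_sum
      intro v hvm
      exact Nat.not_odd_iff_even.mp (Finset.mem_filter.mp hvm).2
    rcases h2 with ⟨a, ha⟩
    rcases heven with ⟨b, hb⟩
    refine ⟨b - a, ?_⟩
    omega
  -- O must be empty
  have hOempty : O = ∅ := by
    rcases Nat.le_one_iff_eq_zero_or_eq_one.mp hOle with h0 | h1
    · exact Finset.card_eq_zero.mp h0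
    · exfalso
      obtain ⟨v, hvO⟩ := Finset.card_eq_one.mp h1
      rw [hvO, Finset.sum_singleton] at hevenO
      have : Odd (degree S v) := by
        have : v ∈ O := by rw [hvO]; exact Finset.mem_singleton_self v
        exact (Finset.mem_filter.mp this).2
      exact (Nat.not_odd_iff_even.mpr hevenO) this
  have hallEven : ∀ v, Even (degree S v) := by
    intro v
    by_contra h
    have : v ∈ O := Finset.mem_filter.mpr ⟨Finset.mem_univ v, Nat.not_even_iff_odd.mp h⟩
    rw [hOempty] at this
    exact absurd this (Finset.notMem_empty v)
  -- verts S and verts (γ \ S) are disjoint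
  have hdisj : ∀ v, v ∈ verts S → v ∉ verts (γ \ S) := by
    intro v hvS hvC
    have h1 : 0 < degree S v := by
      have := Finset.mem_filter.mp hvS; simpa [verts] using this.2
    have h2 : 0 < degree (γ \ S) v := by
      have := Finset.mem_filter.mp hvC; simpa [verts] using this.2
    have hvγ : v ∈ verts γ := verts_mono hSγ hvS
    have hsplit := degree_split hSγ v
    rw [hdegγ v hvγ] at hsplit
    have h3 : degree S v = 1 := by omega
    exact Nat.not_even_one (h3 ▸ hallEven v)
  -- connectivity contradiction
  have he₀S : e₀ ∈ S := Finset.mem_inter.mpr ⟨he, he'⟩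
  have huS : e₀.1 ∈ verts S := mem_verts_iff.mpr ⟨e₀, he₀S, Or.inl rfl⟩
  have he₂C : e₂ ∈ γ \ S := Finset.mem_sdiff.mpr
    ⟨he₂γ, fun h => he₂γ' (hSγ' h)⟩
  have hwC : e₂.1 ∈ verts (γ \ S) := mem_verts_iff.mpr ⟨e₂, he₂C, Or.inl rfl⟩
  have huγ : e₀.1 ∈ verts γ := verts_mono hSγ huS
  have hwγ : e₂.1 ∈ verts γ := verts_mono (Finset.sdiff_subset) hwC
  obtain ⟨p⟩ := hγ.2.2.1 e₀.1 huγ e₂.1 hwγ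
  have hwS : e₂.1 ∉ verts S := fun h => hdisj e₂.1 h hwC
  obtain ⟨x, y, hadj, hxS, hyS⟩ :=
    walk_cross {z : Fin N | z ∈ verts S} p huS hwS
  simp only [Set.mem_setOf_eq] at hxS hyS
  rcases (show x ≠ y ∧ ((x, y) ∈ γ ∨ (y, x) ∈ γ) from hadj).2 with hxy | hyx
  · by_cases hmem : (x, y) ∈ S
    · exact hyS (mem_verts_iff.mpr ⟨(x, y), hmem, Or.inr rfl⟩)
    · exact hdisj x hxS (mem_verts_iff.mpr
        ⟨(x, y), Finset.mem_sdiff.mpr ⟨hxy, hmem⟩, Or.inl rfl⟩)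
  · by_cases hmem : (y, x) ∈ S
    · exact hyS (mem_verts_iff.mpr ⟨(y, x), hmem, Or.inl rfl⟩)
    · exact hdisj x hxS (mem_verts_iff.mpr
        ⟨(y, x), Finset.mem_sdiff.mpr ⟨hyx, hmem⟩, Or.inr rfl⟩)

lemma glue_disjoint {γ τ : Finset (Edge N)} (hγ : IsCycle γ)
    (hv : (verts γ ∩ verts τ).card ≤ 1) : Disjoint γ τ := by
  rw [Finset.disjoint_left]
  intro e heγ heτ
  have h1 : e.1 ∈ verts γ ∩ verts τ := Finset.mem_inter.mpr
    ⟨mem_verts_iff.mpr ⟨e, heγ, Or.inl rfl⟩, mem_verts_iff.mpr ⟨e, heτ, Or.inl rfl⟩⟩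
  have h2 : e.2 ∈ verts γ ∩ verts τ := Finset.mem_inter.mpr
    ⟨mem_verts_iff.mpr ⟨e, heγ, Or.inr rfl⟩, mem_verts_iff.mpr ⟨e, heτ, Or.inr rfl⟩⟩
  have hne : e.1 ≠ e.2 := ne_of_lt (hγ.1 e heγ)
  have : 1 < (verts γ ∩ verts τ).card :=
    Finset.one_lt_card.mpr ⟨e.1, h1, e.2, h2, hne⟩
  omega

/-- injectivity of the gluing map `Φ(γ,τ) = γ ∘ τ` on the set
`S_{i₁i₂} = {(γ,τ) ∈ Γ_loop × Γ_sc : {i₁,i₂} ∈ γ, |V_γ ∩ V_τ| ≤ 1}`. -/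
theorem gluing_map_injective (N : ℕ) (i₁ i₂ : Fin N) (h12 : i₁ ≠ i₂)
    (γ τ γ' τ' : Finset (Edge N))
    (hγ : IsCycle γ) (hτ : IsClosed τ) (hγ' : IsCycle γ') (hτ' : IsClosed τ')
    (he : mkEdge i₁ i₂ ∈ γ) (he' : mkEdge i₁ i₂ ∈ γ')
    (hv : (verts γ ∩ verts τ).card ≤ 1) (hv' : (verts γ' ∩ verts τ').card ≤ 1)
    (hU : γ ∪ τ = γ' ∪ τ') :
    γ = γ' ∧ τ = τ' := by
  have h1 : γ ⊆ γ' := glue_subset hγ hγ' he he' hv hU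
  have h2 : γ' ⊆ γ := glue_subset hγ' hγ he' he hv' hU.symm
  have hγγ : γ = γ' := Finset.Subset.antisymm h1 h2
  refine ⟨hγγ, ?_⟩
  have hd : Disjoint γ τ := glue_disjoint hγ hv
  have hd' : Disjoint γ' τ' := glue_disjoint hγ' hv'
  calc τ = (γ ∪ τ) \ γ := (Finset.union_sdiff_cancel_left hd).symm
    _ = (γ' ∪ τ') \ γ' := by rw [hU, hγγ]
    _ = τ' := Finset.union_sdiff_cancel_left hd'

end SK
end
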